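/- (Continuity of eigenfunctions at doubly transitive points) Let (X,d) be a compact metric space, T : X → X a homeomorphism, λ ∈ ℂ, and f : X → ℂ a function such that f(T x) = λ · f(x) for every x ∈ X and such that f is continuous at at least one point of X. If x ∈ X has dense forward orbit {Tⁿ x : n ≥ 0} and dense backward orbit {T⁻ⁿ x : n ≥ 0}, then f is continuous at x. -/
import Mathlib


/-- Continuity of eigenfunctions at doubly transitive points: if `T` is a
homeomorphism of a compact metric space, `f : X → ℂ` satisfies
`f ∘ T = λ · f` everywhere and is continuous at some point, then `f` is
continuous at every point having dense forward and backward orbits. -/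
theorem eigenfunction_continuousAt_of_doubly_transitive
    {X : Type*} [MetricSpace X] [CompactSpace X]
    (T : X ≃ₜ X) (lam : ℂ) (f : X → ℂ)
    (heig : ∀ x : X, f (T x) = lam * f x)
    (hcont : ∃ z : X, ContinuousAt f z)
    (x : X)
    (hfwd : Dense (Set.range fun n : ℕ => (⇑T)^[n] x))
    (hbwd : Dense (Set.range fun n : ℕ => (⇑T.symm)^[n] x)) :
    ContinuousAt f x := by
  have key : ∀ (n : ℕ) (y : X), f ((⇑T)^[n] y) = lam ^ n * f y := by
    intro n
    induction n with
    | zero => intro y; simp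
    | succ n ih =>
      intro y
      rw [Function.iterate_succ_apply', heig, ih, pow_succ]
      ring
  obtain ⟨z, hz⟩ := hcont
  rw [Metric.continuousAt_iff]
  intro ε hε
  rw [Metric.continuousAt_iff] at hz
  obtain ⟨δ, hδ, hzδ⟩ := hz (ε / 2) (by linarith)
  rcases le_or_gt (‖lam‖) 1 with hlam | hlam
  · -- |λ| ≤ 1 : use the backward orbit
    have hcl : z ∈ closure (Set.range fun n : ℕ => (⇑T.symm)^[n] x) := hbwd z
    rw [Metric.mem_closure_iff] at hcl
    obtain ⟨w, ⟨n, rfl⟩, hw⟩ := hcl (δ / 2) (by linarith)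
    have hct : ContinuousAt ((⇑T.symm)^[n]) x :=
      (T.symm.continuous.iterate n).continuousAt
    rw [Metric.continuousAt_iff] at hct
    obtain ⟨δ', hδ', hδ'h⟩ := hct (δ / 2) (by linarith)
    refine ⟨δ', hδ', fun {y} hy => ?_⟩
    have hli : Function.LeftInverse ⇑T ⇑T.symm := T.apply_symm_apply
    have e : ∀ u : X, f u = lam ^ n * f ((⇑T.symm)^[n] u) := by
      intro u
      conv_lhs => rw [← hli.iterate n u]
      rw [key]
    have hbz : dist ((⇑T.symm)^[n] x) z < δ / 2 := by
      rw [dist_comm] at hw; exact hw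
    have haz : dist ((⇑T.symm)^[n] y) z < δ := by
      have := dist_triangle ((⇑T.symm)^[n] y) ((⇑T.symm)^[n] x) z
      have h1 := hδ'h hy
      linarith
    have hfd : dist (f ((⇑T.symm)^[n] y)) (f ((⇑T.symm)^[n] x)) < ε := by
      have t := dist_triangle (f ((⇑T.symm)^[n] y)) (f z) (f ((⇑T.symm)^[n] x))
      have h1 := hzδ haz
      have h2 := hzδ (show dist ((⇑T.symm)^[n] x) z < δ by linarith)
      rw [dist_comm (f z)] at t
      linarith
    calc dist (f y) (f x)
        = ‖lam‖ ^ n * dist (f ((⇑T.symm)^[n] y)) (f ((⇑T.symm)^[n] x)) := by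
          rw [e y, e x]
          simp [dist_eq_norm, ← mul_sub, norm_mul, norm_pow]
      _ ≤ 1 * dist (f ((⇑T.symm)^[n] y)) (f ((⇑T.symm)^[n] x)) :=
          mul_le_mul_of_nonneg_right (pow_le_one₀ (norm_nonneg _) hlam) dist_nonneg
      _ < ε := by rw [one_mul]; exact hfd
  · -- |λ| > 1 : use the forward orbit
    have hcl : z ∈ closure (Set.range fun n : ℕ => (⇑T)^[n] x) := hfwd z
    rw [Metric.mem_closure_iff] at hcl
    obtain ⟨w, ⟨n, rfl⟩, hw⟩ := hcl (δ / 2) (by linarith)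
    have hct : ContinuousAt ((⇑T)^[n]) x :=
      (T.continuous.iterate n).continuousAt
    rw [Metric.continuousAt_iff] at hct
    obtain ⟨δ', hδ', hδ'h⟩ := hct (δ / 2) (by linarith)
    refine ⟨δ', hδ', fun {y} hy => ?_⟩
    have hbz : dist ((⇑T)^[n] x) z < δ / 2 := by
      rw [dist_comm] at hw; exact hw
    have haz : dist ((⇑T)^[n] y) z < δ := by
      have := dist_triangle ((⇑T)^[n] y) ((⇑T)^[n] x) z
      have h1 := hδ'h hy
      linarith
    have hfd : dist (f ((⇑T)^[n] y)) (f ((⇑T)^[n] x)) < ε := by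
      have t := dist_triangle (f ((⇑T)^[n] y)) (f z) (f ((⇑T)^[n] x))
      have h1 := hzδ haz
      have h2 := hzδ (show dist ((⇑T)^[n] x) z < δ by linarith)
      rw [dist_comm (f z)] at t
      linarith
    have heq : dist (f ((⇑T)^[n] y)) (f ((⇑T)^[n] x))
        = ‖lam‖ ^ n * dist (f y) (f x) := by
      rw [key, key]
      simp [dist_eq_norm, ← mul_sub, norm_mul, norm_pow]
    calc dist (f y) (f x)
        ≤ ‖lam‖ ^ n * dist (f y) (f x) :=
          le_mul_of_one_le_left dist_nonneg (one_le_pow₀ hlam.le)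
      _ = dist (f ((⇑T)^[n] y)) (f ((⇑T)^[n] x)) := heq.symm
      _ < ε := hfd
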